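/- If z ∈ M_N(ℂ) satisfies ze + ez = 0 and z v_{t_i} = 0 for all i = 1, ..., n, then z = 0; that is, a matrix anticommuting with e is uniquely determined by its values on the last basis vector of each Jordan block. -/

import Mathlib

/-- The block-diagonal nilpotent matrix whose diagonal blocks are Jordan blocks of sizes
`p 0, ..., p (n-1)` with eigenvalue `0` (1's on the superdiagonal). -/
noncomputable def jordanMatrix (n N : ℕ) (p : Fin n → ℕ) : Matrix (Fin N) (Fin N) ℂ :=
  Matrix.of fun i j =>
    if (j : ℕ) = (i : ℕ) + 1 ∧
        (∀ m : Fin n, (j : ℕ) ≠ ∑ k ∈ Finset.univ.filter (fun k => k < m), p k)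
    then 1 else 0

/-- The standard basis vector `v_{t_i}` sitting at the last position of the `i`-th Jordan
block, i.e. at (1-based) position `t_i = p₁ + ... + p_i`. -/
noncomputable def lastVec (n N : ℕ) (p : Fin n → ℕ) (i : Fin n) : Fin N → ℂ :=
  fun m => if (m : ℕ) + 1 = ∑ k ∈ Finset.univ.filter (fun k => k ≤ i), p k then 1 else 0

/-- If `z ∈ M_N(ℂ)` satisfies `ze + ez = 0` and `z v_{t_i} = 0` for all
`i = 1, ..., n`, then `z = 0`; a matrix anticommuting with `e` is determined by its values
on the last basis vector of each Jordan block. -/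
theorem stmt4 (n N : ℕ) (hN : 1 ≤ N) (p : Fin n → ℕ)
    (hpos : ∀ i, 1 ≤ p i) (hmono : Monotone p) (hsum : ∑ i, p i = N)
    (z : Matrix (Fin N) (Fin N) ℂ)
    (hz : z * jordanMatrix n N p + jordanMatrix n N p * z = 0)
    (hv : ∀ i : Fin n, z.mulVec (lastVec n N p i) = 0) :
    z = 0 := by
  classical
  set e := jordanMatrix n N p with he
  have hn : 0 < n := by
    rcases Nat.eq_zero_or_pos n with h | h
    · subst h; simp at hsum; omega
    · exact h
  set t : Fin n → ℕ := fun i => ∑ k ∈ Finset.univ.filter (fun k => k ≤ i), p k with ht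
  -- t of the last index is N
  have htlast : t ⟨n - 1, by omega⟩ = N := by
    have : (Finset.univ.filter (fun k : Fin n => k ≤ ⟨n - 1, by omega⟩)) = Finset.univ := by
      ext k
      simp [Fin.le_def]
      omega
    rw [ht]
    simp only [this]
    exact hsum
  -- each t i ≥ 1
  have htpos : ∀ i : Fin n, 1 ≤ t i := by
    intro i
    have hi : i ∈ Finset.univ.filter (fun k : Fin n => k ≤ i) := by simp
    calc 1 ≤ p i := hpos i
      _ ≤ t i := Finset.single_le_sum (fun k _ => Nat.zero_le _) hi
  -- if (j:ℕ)+1 = t i then column j of z vanishes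
  have L1 : ∀ (i : Fin n) (j : Fin N), (j : ℕ) + 1 = t i →
      z.mulVec (Pi.single j 1) = 0 := by
    intro i j hj
    simp only [ht] at hj
    have hlv : lastVec n N p i = Pi.single j 1 := by
      funext m
      simp only [lastVec, Pi.single_apply]
      by_cases hm : m = j
      · subst hm
        rw [if_pos (by exact hj), if_pos rfl]
      · rw [if_neg, if_neg hm]
        intro hc
        apply hm
        have : (m : ℕ) = (j : ℕ) := by omega
        exact Fin.ext this
    rw [← hlv]
    exact hv i
  -- step: e maps column j+1 basis vector to column j basis vector when j+1 not a t value
  have L2 : ∀ (j j' : Fin N), (j' : ℕ) = (j : ℕ) + 1 →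
      (∀ i : Fin n, (j' : ℕ) ≠ t i) →
      e.mulVec (Pi.single j' 1) = Pi.single j 1 := by
    intro j j' hjj hnt
    have hstart : ∀ m : Fin n, (j' : ℕ) ≠ ∑ k ∈ Finset.univ.filter (fun k => k < m), p k := by
      intro m
      by_cases hm : (m : ℕ) = 0
      · have h0 : (Finset.univ.filter (fun k : Fin n => k < m)) = ∅ := by
          ext k
          simp only [Finset.mem_filter, Finset.mem_univ, true_and,
            Finset.notMem_empty, iff_false, Fin.lt_def]
          omega
        rw [h0, Finset.sum_empty]
        omega
      · have hm1 : (m : ℕ) - 1 < n := by omega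
        have : (Finset.univ.filter (fun k : Fin n => k < m))
            = (Finset.univ.filter (fun k : Fin n => k ≤ ⟨(m : ℕ) - 1, hm1⟩)) := by
          ext k
          simp only [Finset.mem_filter, Finset.mem_univ, true_and, Fin.lt_def, Fin.le_def]
          omega
        rw [this]
        have := hnt ⟨(m : ℕ) - 1, hm1⟩
        simp only [ht] at this
        exact this
    funext i
    rw [Matrix.mulVec_single_one, Matrix.col_apply]
    simp only [he, jordanMatrix, Matrix.of_apply, mul_one, Pi.single_apply]
    by_cases hij : i = j
    · subst hij
      rw [if_pos ⟨by omega, hstart⟩, if_pos rfl]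
    · rw [if_neg, if_neg hij]
      rintro ⟨h1, -⟩
      apply hij
      exact Fin.ext (by omega)
  -- all columns vanish, by downward induction
  have hze : z * e = -(e * z) := eq_neg_of_add_eq_zero_left hz
  -- all columns of z vanish, by downward induction
  have hcol : ∀ (d : ℕ) (j : Fin N), N - (j : ℕ) ≤ d + 1 → z.mulVec (Pi.single j 1) = 0 := by
    intro d
    induction d with
    | zero =>
      intro j hj
      have hjN : (j : ℕ) + 1 = N := by
        have := j.isLt
        omega
      refine L1 ⟨n - 1, by omega⟩ j ?_
      rw [htlast]
      exact hjN
    | succ d ih =>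
      intro j hj
      by_cases hex : ∃ i : Fin n, (j : ℕ) + 1 = t i
      · obtain ⟨i, hi⟩ := hex
        exact L1 i j hi
      · push_neg at hex
        have hjN : (j : ℕ) + 1 < N := by
          rcases Nat.lt_or_ge ((j : ℕ) + 1) N with h | h
          · exact h
          · exfalso
            have := j.isLt
            have hjn : (j : ℕ) + 1 = N := by omega
            exact hex ⟨n - 1, by omega⟩ (by rw [htlast]; exact hjn)
        set j' : Fin N := ⟨(j : ℕ) + 1, hjN⟩ with hj'
        have hcol' : z.mulVec (Pi.single j' 1) = 0 := by
          apply ih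
          simp only [hj']
          omega
        have hstep : e.mulVec (Pi.single j' 1) = Pi.single j 1 :=
          L2 j j' rfl (fun i => hex i)
        calc z.mulVec (Pi.single j 1)
            = z.mulVec (e.mulVec (Pi.single j' 1)) := by rw [hstep]
          _ = (z * e).mulVec (Pi.single j' 1) := by rw [Matrix.mulVec_mulVec]
          _ = (-(e * z)).mulVec (Pi.single j' 1) := by rw [hze]
          _ = -(e.mulVec (z.mulVec (Pi.single j' 1))) := by
              rw [Matrix.neg_mulVec, Matrix.mulVec_mulVec]
          _ = 0 := by rw [hcol']; simp
  ext i j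
  have := congrFun (hcol N j (by omega)) i
  rw [Matrix.mulVec_single] at this
  simpa using this
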